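/- Let T be a nonnegative tensor, σ a shape partition of T with d blocks, p ∈ (1,∞)^d, and let x = (x_1,…,x_d) with each x_i ∈ ℝ_+^{n_i} nonzero. Then the following are equivalent: (a) the normalized tuple (x_1/‖x_1‖_{p_1},…,x_d/‖x_d‖_{p_d}) is a (σ,p)-eigenvector of T; (b) there exists θ ∈ ℝ_+^d such that F^{(σ,p)}_i(x) = θ_i x_i for all i ∈ {1,…,d}. Moreover, if ‖x_i‖_{p_i} = 1 for all i, then: (c) if F^{(σ,p)}_i(x) = θ_i x_i for all i, there exists λ ≥ 0 with θ_i = λ^{p_i'−1} for all i and (λ, x) is a (σ,p)-eigenpair of T; and (d) if (λ, x) is a (σ,p)-eigenpair of T, then F^{(σ,p)}_i(x) = λ^{p_i'−1} x_i for all i. -/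

import Mathlib

open scoped BigOperators

namespace TensorPF

/-- A shape partition of the dimension vector `N : Fin m → ℕ` into `d` blocks.
`β` assigns to each index position its block, `rep i` is the minimal element `s_i`
of block `i`, and all positions in a block carry the same dimension. -/
structure ShapePartition (m d : ℕ) (N : Fin m → ℕ) where
  β : Fin m → Fin d
  surj : Function.Surjective β
  rep : Fin d → Fin m
  rep_mem : ∀ i, β (rep i) = i
  rep_min : ∀ (i : Fin d) (j : Fin m), β j = i → rep i ≤ j
  dim_eq : ∀ j j' : Fin m, β j = β j' → N j = N j'

namespace ShapePartition

variable {m d : ℕ} {N : Fin m → ℕ}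

/-- `n i = N (s_i)`, the common dimension of block `i`. -/
def n (σ : ShapePartition m d N) (i : Fin d) : ℕ := N (σ.rep i)

/-- `ν i = |σ_i|`, the size of block `i`. -/
def ν (σ : ShapePartition m d N) (i : Fin d) : ℕ :=
  (Finset.univ.filter (fun k => σ.β k = i)).card

theorem dim_n (σ : ShapePartition m d N) (k : Fin m) : N k = σ.n (σ.β k) :=
  σ.dim_eq k (σ.rep (σ.β k)) (σ.rep_mem (σ.β k)).symm

/-- `x^[σ]` : the `m`-tuple of vectors whose `k`-th component is `x (β k)`. -/
def blowup (σ : ShapePartition m d N) (x : ∀ i, Fin (σ.n i) → ℝ) :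
    ∀ k, Fin (N k) → ℝ :=
  fun k t => x (σ.β k) (Fin.cast (σ.dim_n k) t)

end ShapePartition

/-- The multilinear form `f_T(z) = Σ_J T_J ∏_k z_{k, J k}`. -/
def mform {m : ℕ} {N : Fin m → ℕ} (T : (∀ k, Fin (N k)) → ℝ)
    (z : ∀ k, Fin (N k) → ℝ) : ℝ :=
  ∑ J : ∀ k, Fin (N k), T J * ∏ k, z k (J k)

/-- `𝒯_{k,j}(z)`, the partial derivative of `f_T` with respect to `z_{k,j}`. -/
def tmap {m : ℕ} {N : Fin m → ℕ} (T : (∀ k, Fin (N k)) → ℝ)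
    (k : Fin m) (j : Fin (N k)) (z : ∀ l, Fin (N l) → ℝ) : ℝ :=
  ∑ J : ∀ l, Fin (N l),
    if J k = j then T J * ∏ l ∈ Finset.univ.erase k, z l (J l) else 0

/-- The `ℓ^q` norm of a vector. -/
noncomputable def pnorm {n : ℕ} (q : ℝ) (v : Fin n → ℝ) : ℝ :=
  (∑ j, |v j| ^ q) ^ (1 / q)

/-- `ψ_q(v)_j = |v_j|^{q-2} v_j`. -/
noncomputable def psi {n : ℕ} (q : ℝ) (v : Fin n → ℝ) : Fin n → ℝ :=
  fun j => |v j| ^ (q - 2) * v j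

/-- Spectral radius of a real matrix: the supremum of the moduli of its
complex eigenvalues. -/
noncomputable def rho {d : ℕ} (A : Matrix (Fin d) (Fin d) ℝ) : ℝ :=
  sSup {r : ℝ | ∃ μ : ℂ, μ ∈ spectrum ℂ (A.map (fun t : ℝ => (t : ℂ))) ∧ r = ‖μ‖}

/-- Hilbert projective (semi-)metric on positive vectors. -/
noncomputable def hilbertDist {n : ℕ} (u v : Fin n → ℝ) : ℝ :=
  Real.log ((⨆ j, u j / v j) * (⨆ j, v j / u j))

namespace ShapePartition

variable {m d : ℕ} {N : Fin m → ℕ}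

/-- The matrix `M` of Definition 2.5: the Jacobian of `x ↦ 𝒯_{s_i,t}(x^[σ])`
evaluated at the all-ones tuple. -/
noncomputable def Mmat (σ : ShapePartition m d N) (T : (∀ k, Fin (N k)) → ℝ) :
    (Σ i, Fin (σ.n i)) → (Σ i, Fin (σ.n i)) → ℝ :=
  fun a b =>
    fderiv ℝ (fun x : ∀ i, Fin (σ.n i) → ℝ => tmap T (σ.rep a.1) a.2 (σ.blowup x))
      (fun _ _ => (1 : ℝ)) (Pi.single b.1 (Pi.single b.2 1))

/-- `T` is σ-strictly nonnegative: every row of `M` has a nonzero entry. -/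
def StrictlyNonneg (σ : ShapePartition m d N) (T : (∀ k, Fin (N k)) → ℝ) : Prop :=
  ∀ a : Σ i, Fin (σ.n i), ∃ b : Σ i, Fin (σ.n i), σ.Mmat T a b ≠ 0

/-- `T` is σ-weakly irreducible: the matrix `M` is irreducible, i.e. the digraph
with an edge `a → b` whenever `M a b > 0` is strongly connected. -/
def WeaklyIrreducible (σ : ShapePartition m d N) (T : (∀ k, Fin (N k)) → ℝ) : Prop :=
  ∀ a b : Σ i, Fin (σ.n i),
    Relation.TransGen (fun a b : Σ i, Fin (σ.n i) => 0 < σ.Mmat T a b) a b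

/-- `T` is σ-strongly irreducible. -/
def StronglyIrreducible (σ : ShapePartition m d N) (T : (∀ k, Fin (N k)) → ℝ) : Prop :=
  ∀ x : ∀ i, Fin (σ.n i) → ℝ, (∀ i j, 0 ≤ x i j) → (∀ i, x i ≠ 0) →
    ¬ (∀ i j, 0 < x i j) →
    ∃ (k : Fin d) (l : Fin (σ.n k)), x k l = 0 ∧ 0 < tmap T (σ.rep k) l (σ.blowup x)

/-- `T` is σ-symmetric: invariant under all block-preserving permutations
of the index positions. -/
def PartSymmetric (σ : ShapePartition m d N) (T : (∀ k, Fin (N k)) → ℝ) : Prop :=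
  ∀ (π : Equiv.Perm (Fin m)) (hπ : ∀ k, σ.β (π k) = σ.β k) (J : ∀ k, Fin (N k)),
    T (fun k => Fin.cast (σ.dim_eq (π k) k (hπ k)) (J (π k))) = T J

/-- `(lam, x)` is a `(σ,p)`-eigenpair of `T`. -/
noncomputable def IsEigenpair (σ : ShapePartition m d N) (T : (∀ k, Fin (N k)) → ℝ)
    (p : Fin d → ℝ) (lam : ℝ) (x : ∀ i, Fin (σ.n i) → ℝ) : Prop :=
  (∀ i, pnorm (p i) (x i) = 1) ∧
  ∀ (i : Fin d) (j : Fin (σ.n i)),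
    tmap T (σ.rep i) j (σ.blowup x) = lam * psi (p i) (x i) j

/-- The `(σ,p)`-spectral radius `r^{(σ,p)}(T)`. -/
noncomputable def specRad (σ : ShapePartition m d N) (T : (∀ k, Fin (N k)) → ℝ)
    (p : Fin d → ℝ) : ℝ :=
  sSup {r : ℝ | ∃ lam x, σ.IsEigenpair T p lam x ∧ r = |lam|}

/-- The homogeneity matrix `A(σ,p) = diag(p₁'-1,…,p_d'-1)(ν 1ᵀ - I)`. -/
noncomputable def Amat (σ : ShapePartition m d N) (p : Fin d → ℝ) :
    Matrix (Fin d) (Fin d) ℝ :=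
  Matrix.of fun i j => (p i / (p i - 1) - 1) * ((σ.ν i : ℝ) - if i = j then 1 else 0)

/-- The multi-homogeneous map `F^{(σ,p)}`. -/
noncomputable def Fmap (σ : ShapePartition m d N) (T : (∀ k, Fin (N k)) → ℝ)
    (p : Fin d → ℝ) (x : ∀ i, Fin (σ.n i) → ℝ) : ∀ i, Fin (σ.n i) → ℝ :=
  fun i j => (tmap T (σ.rep i) j (σ.blowup x)) ^ (p i / (p i - 1) - 1)

/-- The map `G^{(σ,p)}_{i,j}(x) = sqrt(x_{i,j} F^{(σ,p)}_{i,j}(x))`. -/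
noncomputable def Gmap (σ : ShapePartition m d N) (T : (∀ k, Fin (N k)) → ℝ)
    (p : Fin d → ℝ) (x : ∀ i, Fin (σ.n i) → ℝ) : ∀ i, Fin (σ.n i) → ℝ :=
  fun i j => Real.sqrt (x i j * σ.Fmap T p x i j)

/-- The upper Collatz–Wielandt function `čw`. -/
noncomputable def cwMax (σ : ShapePartition m d N) (b : Fin d → ℝ) (γ : ℝ)
    (H x : ∀ i, Fin (σ.n i) → ℝ) : ℝ :=
  ∏ i, (⨆ j : Fin (σ.n i), H i j / x i j) ^ ((γ - 1) * b i)

/-- The lower Collatz–Wielandt function `ĉw`. -/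
noncomputable def cwMin (σ : ShapePartition m d N) (b : Fin d → ℝ) (γ : ℝ)
    (H x : ∀ i, Fin (σ.n i) → ℝ) : ℝ :=
  ∏ i, (⨅ j ∈ {j : Fin (σ.n i) | 0 < x i j}, H i j / x i j) ^ ((γ - 1) * b i)

/-- The weighted Hilbert metric `μ_b`. -/
noncomputable def muB (σ : ShapePartition m d N) (b : Fin d → ℝ)
    (x y : ∀ i, Fin (σ.n i) → ℝ) : ℝ :=
  ∑ i, b i * hilbertDist (x i) (y i)

/-- The Rayleigh quotient `Φ`. -/
noncomputable def rayleigh (σ : ShapePartition m d N) (T : (∀ k, Fin (N k)) → ℝ)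
    (p : Fin d → ℝ) (x : ∀ i, Fin (σ.n i) → ℝ) : ℝ :=
  mform T (σ.blowup x) / ∏ i, pnorm (p i) (x i) ^ (σ.ν i)

/-- The tensor norm `‖T‖_{(σ,p)}`. -/
noncomputable def tnorm (σ : ShapePartition m d N) (T : (∀ k, Fin (N k)) → ℝ)
    (p : Fin d → ℝ) : ℝ :=
  sSup {r : ℝ | ∃ x : ∀ i, Fin (σ.n i) → ℝ, (∀ i, x i ≠ 0) ∧ r = |σ.rayleigh T p x|}

end ShapePartition


section Aux

theorem euler {m : ℕ} {N : Fin m → ℕ} (T : (∀ k, Fin (N k)) → ℝ) (k : Fin m)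
    (z : ∀ l, Fin (N l) → ℝ) :
    ∑ j, z k j * tmap T k j z = mform T z := by
  unfold tmap mform
  simp only [Finset.mul_sum, mul_ite, mul_zero]
  rw [Finset.sum_comm]
  refine Finset.sum_congr rfl fun J _ => ?_
  rw [Finset.sum_ite_eq]
  simp only [Finset.mem_univ, if_true]
  rw [← Finset.mul_prod_erase Finset.univ (fun l => z l (J l)) (Finset.mem_univ k)]
  ring

theorem tmap_nonneg {m : ℕ} {N : Fin m → ℕ} (T : (∀ k, Fin (N k)) → ℝ)
    (hT : ∀ J, 0 ≤ T J) (k : Fin m) (j : Fin (N k)) (z : ∀ l, Fin (N l) → ℝ)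
    (hz : ∀ l t, 0 ≤ z l t) : 0 ≤ tmap T k j z := by
  refine Finset.sum_nonneg fun J _ => ?_
  split_ifs with h
  · exact mul_nonneg (hT J) (Finset.prod_nonneg fun l _ => hz l (J l))
  · exact le_refl 0

theorem mform_nonneg {m : ℕ} {N : Fin m → ℕ} (T : (∀ k, Fin (N k)) → ℝ)
    (hT : ∀ J, 0 ≤ T J) (z : ∀ l, Fin (N l) → ℝ)
    (hz : ∀ l t, 0 ≤ z l t) : 0 ≤ mform T z :=
  Finset.sum_nonneg fun J _ =>
    mul_nonneg (hT J) (Finset.prod_nonneg fun l _ => hz l (J l))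

theorem tmap_smul {m : ℕ} {N : Fin m → ℕ} (T : (∀ k, Fin (N k)) → ℝ)
    (k : Fin m) (j : Fin (N k)) (a : Fin m → ℝ) (z : ∀ l, Fin (N l) → ℝ) :
    tmap T k j (fun l t => a l * z l t)
      = (∏ l ∈ Finset.univ.erase k, a l) * tmap T k j z := by
  unfold tmap
  rw [Finset.mul_sum]
  refine Finset.sum_congr rfl fun J _ => ?_
  split_ifs with h
  · rw [Finset.prod_mul_distrib]; ring
  · ring

theorem apply_cast {d : ℕ} {n : Fin d → ℕ} (f : ∀ i, Fin (n i) → ℝ) {a b : Fin d}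
    (h : a = b) (j : Fin (n a)) (j' : Fin (n b)) (hj : (j : ℕ) = (j' : ℕ)) :
    f a j = f b j' := by
  subst h
  congr 1
  exact Fin.ext hj

theorem blowup_rep {m d : ℕ} {N : Fin m → ℕ} (σ : ShapePartition m d N)
    (x : ∀ i, Fin (σ.n i) → ℝ) (i : Fin d) (j : Fin (N (σ.rep i))) :
    σ.blowup x (σ.rep i) j = x i j :=
  apply_cast x (σ.rep_mem i) _ j rfl

theorem psi_eq {n : ℕ} {q : ℝ} (hq : 1 < q) (v : Fin n → ℝ) (hv : ∀ j, 0 ≤ v j)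
    (j : Fin n) : psi q v j = v j ^ (q - 1) := by
  unfold psi
  rcases eq_or_lt_of_le (hv j) with h | h
  · rw [← h, abs_zero, mul_zero, Real.zero_rpow (by linarith : q - 1 ≠ 0)]
  · rw [abs_of_pos h]
    calc v j ^ (q - 2) * v j = v j ^ (q - 2) * v j ^ (1 : ℝ) := by rw [Real.rpow_one]
    _ = v j ^ (q - 2 + 1) := (Real.rpow_add h _ _).symm
    _ = v j ^ (q - 1) := by ring_nf

theorem self_mul_rpow {t q : ℝ} (ht : 0 ≤ t) (hq : 1 < q) :
    t * t ^ (q - 1) = |t| ^ q := by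
  rcases eq_or_lt_of_le ht with h | h
  · rw [← h, zero_mul, abs_zero, Real.zero_rpow (by linarith)]
  · rw [abs_of_pos h]
    calc t * t ^ (q - 1) = t ^ (1 : ℝ) * t ^ (q - 1) := by rw [Real.rpow_one]
    _ = t ^ (1 + (q - 1)) := (Real.rpow_add h _ _).symm
    _ = t ^ q := by ring_nf

theorem pnorm_pos {n : ℕ} {q : ℝ} (hq : 0 < q) {v : Fin n → ℝ} (hv : v ≠ 0) :
    0 < pnorm q v := by
  obtain ⟨j, hj⟩ := Function.ne_iff.mp hv
  have hj' : v j ≠ 0 := by simpa using hj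
  have h1 : 0 < ∑ t, |v t| ^ q := by
    refine Finset.sum_pos' (fun t _ => Real.rpow_nonneg (abs_nonneg _) q)
      ⟨j, Finset.mem_univ j, Real.rpow_pos_of_pos (abs_pos.mpr hj') q⟩
  exact Real.rpow_pos_of_pos h1 _

theorem pnorm_rpow {n : ℕ} {q : ℝ} (hq : 0 < q) (v : Fin n → ℝ) :
    pnorm q v ^ q = ∑ j, |v j| ^ q := by
  unfold pnorm
  rw [← Real.rpow_mul (Finset.sum_nonneg fun t _ => Real.rpow_nonneg (abs_nonneg _) q),
    one_div, inv_mul_cancel₀ hq.ne', Real.rpow_one]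

theorem pnorm_normalize {n : ℕ} {q : ℝ} (hq : 0 < q) {v : Fin n → ℝ} (hv : v ≠ 0) :
    pnorm q (fun j => v j / pnorm q v) = 1 := by
  have hc := pnorm_pos hq hv
  have h1 : ∑ j, |v j / pnorm q v| ^ q = 1 := by
    rw [Finset.sum_congr rfl fun j _ => by
        rw [abs_div, abs_of_pos hc, Real.div_rpow (abs_nonneg _) hc.le],
      ← Finset.sum_div, ← pnorm_rpow hq v, div_self (by positivity)]
  show (∑ j, |v j / pnorm q v| ^ q) ^ (1 / q) = 1
  rw [h1, Real.one_rpow]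

end Aux

/-- correspondence between `(σ,p)`-eigenvectors of `T` and
multi-homogeneous eigenvectors of `F^{(σ,p)}` (Lemma 5.1 of the paper). -/
theorem eigenpair_iff_multihomogeneous_fixed_point
    {m d : ℕ} (hm : 0 < m) {N : Fin m → ℕ} (hN : ∀ k, 0 < N k)
    (T : (∀ k, Fin (N k)) → ℝ) (hT : ∀ J, 0 ≤ T J)
    (σ : ShapePartition m d N) (p : Fin d → ℝ) (hp : ∀ i, 1 < p i)
    (x : ∀ i, Fin (σ.n i) → ℝ) (hx : ∀ i j, 0 ≤ x i j) (hxnz : ∀ i, x i ≠ 0) :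
    ((∃ lam : ℝ, σ.IsEigenpair T p lam (fun i j => x i j / pnorm (p i) (x i))) ↔
      (∃ θ : Fin d → ℝ, (∀ i, 0 ≤ θ i) ∧ ∀ i j, σ.Fmap T p x i j = θ i * x i j)) ∧
    ((∀ i, pnorm (p i) (x i) = 1) →
      ((∀ θ : Fin d → ℝ, (∀ i, 0 ≤ θ i) → (∀ i j, σ.Fmap T p x i j = θ i * x i j) →
          ∃ lam : ℝ, 0 ≤ lam ∧ (∀ i, θ i = lam ^ (p i / (p i - 1) - 1)) ∧
            σ.IsEigenpair T p lam x) ∧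
        (∀ lam : ℝ, σ.IsEigenpair T p lam x →
          ∀ i j, σ.Fmap T p x i j = lam ^ (p i / (p i - 1) - 1) * x i j))) := by
  have hp1 : ∀ i, (0:ℝ) < p i - 1 := fun i => by linarith [hp i]
  have hp0 : ∀ i, (0:ℝ) < p i := fun i => by linarith [hp i]
  have he1 : ∀ i, (p i / (p i - 1) - 1) * (p i - 1) = 1 := fun i => by
    have h := (by linarith [hp i] : p i - 1 ≠ 0)
    field_simp
    ring
  have he1' : ∀ i, (p i - 1) * (p i / (p i - 1) - 1) = 1 := fun i => by
    rw [mul_comm]; exact he1 i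
  have hepos : ∀ i, 0 < p i / (p i - 1) - 1 := fun i => by
    nlinarith [he1 i, hp1 i]
  -- basic positivity data
  set c : Fin d → ℝ := fun i => pnorm (p i) (x i) with hc_def
  have hc : ∀ i, 0 < c i := fun i => pnorm_pos (hp0 i) (hxnz i)
  set y : ∀ i, Fin (σ.n i) → ℝ := fun i j => x i j / c i with hy_def
  have hy0 : ∀ i j, 0 ≤ y i j := fun i j => div_nonneg (hx i j) (hc i).le
  have hyx : ∀ i j, x i j = c i * y i j := fun i j => by
    rw [hy_def, mul_div_cancel₀ _ (hc i).ne']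
  have hynorm : ∀ i, pnorm (p i) (y i) = 1 := fun i =>
    pnorm_normalize (hp0 i) (hxnz i)
  have hynz : ∀ i, y i ≠ 0 := by
    intro i h
    apply hxnz i
    funext j
    have := congrFun h j
    simp only [hy_def, Pi.zero_apply, div_eq_zero_iff] at this
    rcases this with h' | h'
    · exact h'
    · exact absurd h' (hc i).ne'
  have hbx : ∀ k t, 0 ≤ σ.blowup x k t := fun k t => hx _ _
  have hby : ∀ k t, 0 ≤ σ.blowup y k t := fun k t => hy0 _ _
  have htx_nonneg : ∀ (i : Fin d) (j : Fin (σ.n i)),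
      0 ≤ tmap T (σ.rep i) j (σ.blowup x) := fun i j =>
    tmap_nonneg T hT _ _ _ hbx
  have hty_nonneg : ∀ (i : Fin d) (j : Fin (σ.n i)),
      0 ≤ tmap T (σ.rep i) j (σ.blowup y) := fun i j =>
    tmap_nonneg T hT _ _ _ hby
  set A : Fin d → ℝ := fun i => ∏ l ∈ Finset.univ.erase (σ.rep i), c (σ.β l) with hA_def
  have hA : ∀ i, 0 < A i := fun i => Finset.prod_pos fun l _ => hc _
  have htx_y : ∀ (i : Fin d) (j : Fin (σ.n i)),
      tmap T (σ.rep i) j (σ.blowup x) = A i * tmap T (σ.rep i) j (σ.blowup y) := by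
    intro i j
    have hb : σ.blowup x = fun k t => c (σ.β k) * σ.blowup y k t := by
      funext k t
      show x (σ.β k) _ = c (σ.β k) * (x (σ.β k) _ / c (σ.β k))
      rw [mul_div_cancel₀ _ (hc _).ne']
    rw [hb]
    exact tmap_smul T (σ.rep i) j (fun k => c (σ.β k)) (σ.blowup y)
  -- from a fixed-point relation to a tmap identity (on x itself)
  have hFt : ∀ (θ : Fin d → ℝ), (∀ i, 0 ≤ θ i) →
      (∀ i j, σ.Fmap T p x i j = θ i * x i j) →
      ∀ (i : Fin d) (j : Fin (σ.n i)),
        tmap T (σ.rep i) j (σ.blowup x) = θ i ^ (p i - 1) * x i j ^ (p i - 1) := by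
    intro θ hθ0 hF i j
    have h := congrArg (· ^ (p i - 1)) (hF i j)
    simp only [ShapePartition.Fmap] at h
    rwa [← Real.rpow_mul (htx_nonneg i j), he1 i, Real.rpow_one,
      Real.mul_rpow (hθ0 i) (hx i j)] at h
  -- eigenvalue of a nonnegative eigenvector is nonnegative
  have heignn : ∀ (lam : ℝ) (w : ∀ i, Fin (σ.n i) → ℝ), (∀ i j, 0 ≤ w i j) →
      (∀ i, w i ≠ 0) →
      (∀ (i : Fin d) (j : Fin (σ.n i)),
        tmap T (σ.rep i) j (σ.blowup w) = lam * psi (p i) (w i) j) →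
      ∀ i : Fin d, 0 ≤ lam := by
    intro lam w hw0 hwnz heig i
    obtain ⟨j, hj⟩ := Function.ne_iff.mp (hwnz i)
    have hj' : w i j ≠ 0 := by simpa using hj
    have hwj : 0 < w i j := (hw0 i j).lt_of_ne (Ne.symm hj')
    have hpsi : 0 < psi (p i) (w i) j := by
      rw [psi_eq (hp i) (w i) (hw0 i) j]
      exact Real.rpow_pos_of_pos hwj _
    have h1 : 0 ≤ lam * psi (p i) (w i) j := by
      rw [← heig i j]
      exact tmap_nonneg T hT _ _ _ fun k t => hw0 _ _
    nlinarith
  constructor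
  · constructor
    · -- eigenvector of normalization → fixed point of F
      rintro ⟨lam, _hnorm, heig⟩
      refine ⟨fun i => (A i * lam) ^ (p i / (p i - 1) - 1) / c i, fun i => ?_, fun i j => ?_⟩
      · have hlam0 : 0 ≤ lam := heignn lam y hy0 hynz heig i
        exact div_nonneg (Real.rpow_nonneg (mul_nonneg (hA i).le hlam0) _) (hc i).le
      · have hlam0 : 0 ≤ lam := heignn lam y hy0 hynz heig i
        have h1 : tmap T (σ.rep i) j (σ.blowup x)
            = (A i * lam) * y i j ^ (p i - 1) := by
          rw [htx_y i j, heig i j, psi_eq (hp i) (y i) (hy0 i) j]; ring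
        simp only [ShapePartition.Fmap]
        rw [h1, Real.mul_rpow (mul_nonneg (hA i).le hlam0)
            (Real.rpow_nonneg (hy0 i j) _),
          ← Real.rpow_mul (hy0 i j), he1' i, Real.rpow_one]
        simp only [hy_def]
        ring
    · -- fixed point of F → eigenvector of normalization
      rintro ⟨θ, hθ0, hF⟩
      have htx := hFt θ hθ0 hF
      set mu : Fin d → ℝ := fun i => (A i)⁻¹ * (θ i ^ (p i - 1) * c i ^ (p i - 1))
        with hmu_def
      have hty : ∀ (i : Fin d) (j : Fin (σ.n i)),
          tmap T (σ.rep i) j (σ.blowup y) = mu i * y i j ^ (p i - 1) := by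
        intro i j
        have h1 := htx_y i j
        rw [htx i j, hyx i j, Real.mul_rpow (hc i).le (hy0 i j)] at h1
        have h2 : (A i)⁻¹ * (θ i ^ (p i - 1) * (c i ^ (p i - 1) * y i j ^ (p i - 1)))
            = tmap T (σ.rep i) j (σ.blowup y) := by
          rw [h1, inv_mul_cancel_left₀ (hA i).ne']
        rw [← h2]
        simp only [hmu_def]
        ring
      set lam : ℝ := mform T (σ.blowup y) with hlam_def
      have hkey : ∀ i, mu i = lam := by
        intro i
        have h := euler T (σ.rep i) (σ.blowup y)
        have h2 : ∑ j, σ.blowup y (σ.rep i) j * tmap T (σ.rep i) j (σ.blowup y)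
            = mu i * ∑ j, |y i j| ^ (p i) := by
          rw [Finset.mul_sum]
          refine Finset.sum_congr rfl fun j _ => ?_
          rw [blowup_rep, hty i j, ← mul_assoc, mul_comm (y i j) (mu i), mul_assoc,
            self_mul_rpow (hy0 i j) (hp i)]
        have h3 : ∑ j, |y i j| ^ (p i) = 1 := by
          rw [← pnorm_rpow (hp0 i), hynorm i, Real.one_rpow]
        rw [h2, h3, mul_one] at h
        exact h
      refine ⟨lam, hynorm, fun i j => ?_⟩
      rw [psi_eq (hp i) (y i) (hy0 i) j, ← hkey i]
      exact hty i j
  · -- normalized case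
    intro hn
    constructor
    · intro θ hθ0 hF
      have htx := hFt θ hθ0 hF
      set lam : ℝ := mform T (σ.blowup x) with hlam_def
      have hlam0 : 0 ≤ lam := mform_nonneg T hT _ hbx
      have hkey : ∀ i, θ i ^ (p i - 1) = lam := by
        intro i
        have h := euler T (σ.rep i) (σ.blowup x)
        have h2 : ∑ j, σ.blowup x (σ.rep i) j * tmap T (σ.rep i) j (σ.blowup x)
            = θ i ^ (p i - 1) * ∑ j, |x i j| ^ (p i) := by
          rw [Finset.mul_sum]
          refine Finset.sum_congr rfl fun j _ => ?_
          rw [blowup_rep, htx i j, ← mul_assoc, mul_comm (x i j) (θ i ^ (p i - 1)),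
            mul_assoc, self_mul_rpow (hx i j) (hp i)]
        have h3 : ∑ j, |x i j| ^ (p i) = 1 := by
          rw [← pnorm_rpow (hp0 i), hn i, Real.one_rpow]
        rw [h2, h3, mul_one] at h
        exact h
      refine ⟨lam, hlam0, fun i => ?_, hn, fun i j => ?_⟩
      · rw [← hkey i, ← Real.rpow_mul (hθ0 i), he1' i, Real.rpow_one]
      · rw [htx i j, hkey i, psi_eq (hp i) (x i) (hx i) j]
    · rintro lam ⟨_hn', heig⟩ i j
      have hlam0 : 0 ≤ lam := heignn lam x hx hxnz heig i
      simp only [ShapePartition.Fmap]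
      rw [heig i j, psi_eq (hp i) (x i) (hx i) j,
        Real.mul_rpow hlam0 (Real.rpow_nonneg (hx i j) _),
        ← Real.rpow_mul (hx i j), he1' i, Real.rpow_one]

end TensorPF
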